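/- Let x ∈ ∂D and let z ∈ ℝ^n satisfy W̄(S)·z ≥ 0 for every S ∈ S(x). Then z ∈ T_D(x). -/

import Mathlib

/-- A feedforward ReLU network with `L` layers. `d 0` is the input dimension `n`;
`d i` is the width `M_i` of layer `i` for `1 ≤ i ≤ L`. `W i j : Fin (d i) → ℝ` is the
weight vector of neuron `j` in layer `i+1` (paper layer `i+1`), `r i j` its bias,
`Ω` the output weights and `ψ` the output bias. -/
structure ReluNet where
  L : ℕ
  hL : 1 ≤ L
  d : ℕ → ℕ
  W : (i : ℕ) → Fin (d (i + 1)) → Fin (d i) → ℝ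
  r : (i : ℕ) → Fin (d (i + 1)) → ℝ
  Ω : Fin (d L) → ℝ
  ψ : ℝ

namespace ReluNet

open Classical

/-- Layer outputs: `z N i x` is the output vector of paper layer `i` (`z N 0 x = x`). -/
def z (N : ReluNet) : (i : ℕ) → (Fin (N.d 0) → ℝ) → Fin (N.d i) → ℝ
  | 0, x => x
  | i + 1, x => fun j => max 0 ((∑ k, N.W i j k * z N i x k) + N.r i j)

/-- Pre-activation input of neuron `(i+1, j)` (paper indexing) at input `x`. -/
def pre (N : ReluNet) (i : ℕ) (j : Fin (N.d (i + 1))) (x : Fin (N.d 0) → ℝ) : ℝ :=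
  (∑ k, N.W i j k * N.z i x k) + N.r i j

/-- The network output `b(x) = Ω ⬝ z_L(x) + ψ`. -/
def b (N : ReluNet) (x : Fin (N.d 0) → ℝ) : ℝ :=
  (∑ j, N.Ω j * N.z N.L x j) + N.ψ

/-- An activation set: a set of neurons in each layer (`S i` lives in paper layer `i+1`). -/
abbrev ActSet (N : ReluNet) := (i : ℕ) → Set (Fin (N.d (i + 1)))

/-- The activation region `X̄(S)`: inputs whose pre-activation at neuron `(i,j)` is `≥ 0`
for `j ∈ S_i` and `≤ 0` for `j ∉ S_i`. -/
def region (N : ReluNet) (S : N.ActSet) : Set (Fin (N.d 0) → ℝ) :=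
  {x | ∀ i < N.L, ∀ j : Fin (N.d (i + 1)),
      (j ∈ S i → 0 ≤ N.pre i j x) ∧ (j ∉ S i → N.pre i j x ≤ 0)}

/-- `Wbar N S i j` is the column `W̄_{ij}(S) ∈ ℝ^n` (paper layer `i`); `Wbar N S 0` is the
identity matrix convention `W̄_0(S) = I`. -/
noncomputable def Wbar (N : ReluNet) (S : N.ActSet) : (i : ℕ) → Fin (N.d i) → Fin (N.d 0) → ℝ
  | 0, j => fun k => if k = j then 1 else 0
  | i + 1, j =>
      if j ∈ S i then (fun k => ∑ j', N.W i j j' * Wbar N S i j' k) else 0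

/-- `rbar N S i j` is `r̄_{ij}(S)` (paper layer `i`); `rbar N S 0 = 0` by convention. -/
noncomputable def rbar (N : ReluNet) (S : N.ActSet) : (i : ℕ) → Fin (N.d i) → ℝ
  | 0, _ => 0
  | i + 1, j =>
      if j ∈ S i then (∑ j', N.W i j j' * rbar N S i j') + N.r i j else 0

/-- `W̄(S) = W̄_L(S) Ω ∈ ℝ^n`. -/
noncomputable def WbarOut (N : ReluNet) (S : N.ActSet) : Fin (N.d 0) → ℝ :=
  fun k => ∑ j, N.Ω j * N.Wbar S N.L j k

/-- `r̄(S) = Ω ⬝ r̄_L(S) + ψ`. -/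
noncomputable def rbarOut (N : ReluNet) (S : N.ActSet) : ℝ :=
  (∑ j, N.Ω j * N.rbar S N.L j) + N.ψ

/-- `gradW N S i j = W̄_i(S) W_{(i+1)j} ∈ ℝ^n` (paper: `W̄_{i-1}(S) W_{ij}` for neuron
`(i,j)` with `i = ` my `i+1`). -/
noncomputable def gradW (N : ReluNet) (S : N.ActSet) (i : ℕ) (j : Fin (N.d (i + 1))) :
    Fin (N.d 0) → ℝ :=
  fun k => ∑ j', N.W i j j' * N.Wbar S i j' k

end ReluNet

/-- Euclidean distance from a point to a set in `ℝ^n` (it is `0` for the empty set,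
matching the convention of `Metric.infDist`). -/
noncomputable def eInfDist {n : ℕ} (x : Fin n → ℝ) (A : Set (Fin n → ℝ)) : ℝ :=
  sInf ((fun y => Real.sqrt (∑ k, (x k - y k) ^ 2)) '' A)

/-- The tangent cone `T_A(x) = {z : liminf_{τ→0⁺} dist(x + τz, A)/τ = 0}`, with `dist`
the Euclidean distance from a point to a set. -/
noncomputable def tangentCone {n : ℕ} (A : Set (Fin n → ℝ)) (x : Fin n → ℝ) :
    Set (Fin n → ℝ) :=
  {z | Filter.liminf (fun τ : ℝ => eInfDist (x + τ • z) A / τ)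
        (nhdsWithin 0 (Set.Ioi 0)) = 0}

namespace ReluNet

lemma continuous_z (N : ReluNet) (i : ℕ) : Continuous (fun x => N.z i x) := by
  induction i with
  | zero => exact continuous_id
  | succ i ih =>
    rw [continuous_pi_iff]
    intro j
    show Continuous fun x => max 0 ((∑ k, N.W i j k * N.z i x k) + N.r i j)
    exact continuous_const.max
      ((continuous_finset_sum _ fun k _ =>
        continuous_const.mul ((continuous_apply k).comp ih)).add continuous_const)

lemma continuous_pre (N : ReluNet) (i : ℕ) (j : Fin (N.d (i + 1))) :
    Continuous (fun x => N.pre i j x) :=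
  (continuous_finset_sum _ fun k _ =>
    continuous_const.mul ((continuous_apply k).comp (N.continuous_z i))).add continuous_const

lemma continuous_b (N : ReluNet) : Continuous N.b :=
  (continuous_finset_sum _ fun k _ =>
    continuous_const.mul ((continuous_apply k).comp (N.continuous_z N.L))).add continuous_const

lemma z_affine (N : ReluNet) (S : N.ActSet) {y : Fin (N.d 0) → ℝ} (hy : y ∈ N.region S) :
    ∀ i, i ≤ N.L → ∀ j, N.z i y j = (∑ k, N.Wbar S i j k * y k) + N.rbar S i j := by
  intro i
  induction i with
  | zero =>
    intro _ j
    simp [z, Wbar, rbar, ite_mul]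
  | succ i ih =>
    intro hiL j
    have hi : i < N.L := hiL
    have ihle : i ≤ N.L := le_of_lt hi
    have hpre : N.pre i j y = (∑ k, (∑ j', N.W i j j' * N.Wbar S i j' k) * y k)
        + ((∑ j', N.W i j j' * N.rbar S i j') + N.r i j) := by
      unfold pre
      simp only [ih ihle, mul_add, Finset.mul_sum, Finset.sum_add_distrib,
        Finset.sum_mul, mul_assoc, add_assoc]
      rw [Finset.sum_comm]
    have hzj : N.z (i+1) y j = max 0 (N.pre i j y) := rfl
    by_cases hjS : j ∈ S i
    · have h0 := ((hy i hi j).1 hjS)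
      rw [hzj, max_eq_right h0, hpre]
      simp only [Wbar, rbar, if_pos hjS]
    · have h0 := ((hy i hi j).2 hjS)
      rw [hzj, max_eq_left h0]
      simp [Wbar, rbar, if_neg hjS]

lemma b_affine (N : ReluNet) (S : N.ActSet) {y : Fin (N.d 0) → ℝ} (hy : y ∈ N.region S) :
    N.b y = (∑ k, N.WbarOut S k * y k) + N.rbarOut S := by
  unfold b WbarOut rbarOut
  simp only [N.z_affine S hy N.L le_rfl, mul_add, Finset.mul_sum, Finset.sum_add_distrib,
    Finset.sum_mul, mul_assoc, add_assoc]
  rw [Finset.sum_comm]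

end ReluNet


lemma eInfDist_nonneg {n : ℕ} (y : Fin n → ℝ) (A : Set (Fin n → ℝ)) : 0 ≤ eInfDist y A :=
  Real.sInf_nonneg fun t ht => by obtain ⟨w, _, rfl⟩ := ht; exact Real.sqrt_nonneg _

lemma eInfDist_eq_zero_of_mem {n : ℕ} {y : Fin n → ℝ} {A : Set (Fin n → ℝ)} (hy : y ∈ A) :
    eInfDist y A = 0 := by
  refine le_antisymm ?_ (eInfDist_nonneg y A)
  have h0 : (0 : ℝ) ∈ (fun w => Real.sqrt (∑ k, (y k - w k) ^ 2)) '' A :=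
    ⟨y, hy, by simp⟩
  exact csInf_le ⟨0, fun t ht => by obtain ⟨w, _, rfl⟩ := ht; exact Real.sqrt_nonneg _⟩ h0

open ReluNet in
/-- If `x ∈ ∂D` and `z` satisfies `W̄(S)·z ≥ 0` for every activation
set `S ∈ S(x)`, then `z` lies in the tangent cone `T_D(x)`. -/
theorem stmt13 (N : ReluNet) (x : Fin (N.d 0) → ℝ)
    (hx : x ∈ frontier {y : Fin (N.d 0) → ℝ | 0 ≤ N.b y})
    (z : Fin (N.d 0) → ℝ)
    (hz : ∀ S : N.ActSet, x ∈ N.region S → 0 ≤ ∑ k, N.WbarOut S k * z k) :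
    z ∈ tangentCone {y : Fin (N.d 0) → ℝ | 0 ≤ N.b y} x := by
  classical
  set D := {y : Fin (N.d 0) → ℝ | 0 ≤ N.b y} with hDdef
  have hDclosed : IsClosed D := isClosed_le continuous_const N.continuous_b
  have hxD : x ∈ D := by
    have := frontier_subset_closure hx
    rwa [hDclosed.closure_eq] at this
  have hbx : N.b x = 0 := by
    by_contra hne
    have hpos : 0 < N.b x := lt_of_le_of_ne hxD (Ne.symm hne)
    have : x ∈ interior D := by
      rw [mem_interior]
      exact ⟨{y | 0 < N.b y}, fun y hy => (le_of_lt hy : (0:ℝ) ≤ N.b y),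
        isOpen_lt continuous_const N.continuous_b, hpos⟩
    exact hx.2 this
  set l := nhdsWithin (0 : ℝ) (Set.Ioi 0) with hldef
  haveI : l.NeBot := nhdsGT_neBot 0
  set Pat : ℝ → ((i : Fin N.L) → Fin (N.d (i.1 + 1)) → Bool) :=
    fun τ i j => decide (0 ≤ N.pre i.1 j (x + τ • z)) with hPat
  obtain ⟨p, hp⟩ : ∃ p, ∃ᶠ τ in l, Pat τ = p := by
    by_contra h
    push_neg at h
    have h' : ∀ᶠ τ in l, ∀ p, Pat τ ≠ p :=
      Filter.eventually_all.mpr fun p => h p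
    obtain ⟨τ, hτ⟩ := h'.exists
    exact hτ (Pat τ) rfl
  set S : N.ActSet := fun i => {j | ∃ h : i < N.L, p ⟨i, h⟩ j = true} with hSdef
  set A : Set ℝ := {τ | Pat τ = p} with hAdef
  -- points of A lie in the region of S
  have hA : ∀ τ ∈ A, x + τ • z ∈ N.region S := by
    intro τ hτ i hi j
    have hpat : decide (0 ≤ N.pre i j (x + τ • z)) = p ⟨i, hi⟩ j :=
      congrFun (congrFun hτ ⟨i, hi⟩) j
    constructor
    · intro hjS
      obtain ⟨h', hp'⟩ := hjS
      rw [hp'] at hpat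
      exact of_decide_eq_true hpat
    · intro hjS
      have hfalse : p ⟨i, hi⟩ j = false := by
        cases hb : p ⟨i, hi⟩ j
        · rfl
        · exact absurd ⟨hi, hb⟩ hjS
      rw [hfalse] at hpat
      exact le_of_not_ge (of_decide_eq_false hpat)
  -- pass to the filter l ⊓ 𝓟 A
  haveI hl' : (l ⊓ Filter.principal A).NeBot := Filter.frequently_iff_neBot.mp hp
  have hxS : x ∈ N.region S := by
    intro i hi j
    have hcont : Continuous fun τ : ℝ => N.pre i j (x + τ • z) :=
      (N.continuous_pre i j).comp (continuous_const.add (continuous_id.smul continuous_const))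
    have htd : Filter.Tendsto (fun τ : ℝ => N.pre i j (x + τ • z))
        (l ⊓ Filter.principal A) (nhds (N.pre i j x)) := by
      have h0 : Filter.Tendsto (fun τ : ℝ => N.pre i j (x + τ • z)) (nhds 0)
          (nhds (N.pre i j x)) := by
        have := hcont.tendsto 0
        simpa using this
      exact h0.mono_left (le_trans inf_le_left nhdsWithin_le_nhds)
    constructor
    · intro hjS
      refine ge_of_tendsto htd ?_
      exact Filter.eventually_inf_principal.mpr
        (Filter.Eventually.of_forall fun τ hτ => (hA τ hτ i hi j).1 hjS)
    · intro hjS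
      refine le_of_tendsto htd ?_
      exact Filter.eventually_inf_principal.mpr
        (Filter.Eventually.of_forall fun τ hτ => (hA τ hτ i hi j).2 hjS)
  have hc : 0 ≤ ∑ k, N.WbarOut S k * z k := hz S hxS
  have hbx0 : (∑ k, N.WbarOut S k * x k) + N.rbarOut S = 0 := by
    rw [← N.b_affine S hxS]; exact hbx
  have hbD : ∀ τ ∈ A, 0 ≤ τ → x + τ • z ∈ D := by
    intro τ hτ hτ0
    show 0 ≤ N.b (x + τ • z)
    rw [N.b_affine S (hA τ hτ)]
    have hsum : ∑ k, N.WbarOut S k * (x + τ • z) k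
        = (∑ k, N.WbarOut S k * x k) + τ * ∑ k, N.WbarOut S k * z k := by
      simp only [Pi.add_apply, Pi.smul_apply, smul_eq_mul, mul_add, Finset.sum_add_distrib,
        Finset.mul_sum]
      congr 1
      exact Finset.sum_congr rfl fun k _ => by ring
    rw [hsum]
    have := mul_nonneg hτ0 hc
    linarith
  -- conclude the liminf is 0
  show Filter.liminf (fun τ : ℝ => eInfDist (x + τ • z) D / τ) l = 0
  have hge : ∀ᶠ τ in l, 0 ≤ eInfDist (x + τ • z) D / τ := by
    filter_upwards [self_mem_nhdsWithin] with τ hτ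
    exact div_nonneg (eInfDist_nonneg _ _) (le_of_lt hτ)
  have hfreq : ∃ᶠ τ in l, eInfDist (x + τ • z) D / τ ≤ 0 := by
    refine (hp.and_eventually self_mem_nhdsWithin).mono ?_
    rintro τ ⟨hτA, hτpos⟩
    have h0 : eInfDist (x + τ • z) D = 0 :=
      eInfDist_eq_zero_of_mem (hbD τ hτA (le_of_lt hτpos))
    rw [h0, zero_div]
  refine le_antisymm (Filter.liminf_le_of_frequently_le hfreq ⟨0, ?_⟩)
    (Filter.le_liminf_of_le (Filter.IsCoboundedUnder.of_frequently_le hfreq) hge)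
  exact Filter.eventually_map.mpr hge
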